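/- Covering injection lemma: let H be the greedy t-spanner of a metric space with t < 2 and H' a t-spanner of M_H. For each edge e' of H' fix a shortest path P_{e'} in H between its endpoints, and say e' covers each edge of P_{e'}. Then no edge of H' can cover two distinct edges of H that both lie outside H' (where an edge with a required shortest path through e' counts as covered by e'). -/

import Mathlib

open SimpleGraph
open scoped ENNReal

variable {V : Type*} [Fintype V] [DecidableEq V]

/-- The simple graph determined by a finite edge set. -/
def toSG (E : Finset (Sym2 V)) : SimpleGraph V := SimpleGraph.fromEdgeSet (↑E)

/-- Weight (in `ℝ≥0∞`) of a walk, given edge weights `w`. -/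
noncomputable def walkWeight (w : Sym2 V → ℝ) {G : SimpleGraph V} {u v : V}
    (p : G.Walk u v) : ℝ≥0∞ :=
  (p.edges.map fun e => ENNReal.ofReal (w e)).sum

/-- Shortest-path distance (in `ℝ≥0∞`) between the endpoints of the pair `e`
in the graph with edge set `H` and edge weights `w`.  (`⊤` if disconnected.) -/
noncomputable def edist (H : Finset (Sym2 V)) (w : Sym2 V → ℝ) (e : Sym2 V) : ℝ≥0∞ :=
  sInf {x | ∃ (u v : V) (p : (toSG H).Walk u v), e = s(u, v) ∧ walkWeight w p = x}

/-- Total weight of an edge set. -/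
noncomputable def gweight (w : Sym2 V → ℝ) (H : Finset (Sym2 V)) : ℝ := ∑ e ∈ H, w e

/-- `H` is a `t`-spanner of the graph with edge set `E` and weights `w`. -/
def IsSpanner (w : Sym2 V → ℝ) (t : ℝ) (E H : Finset (Sym2 V)) : Prop :=
  H ⊆ E ∧ ∀ u v : V, edist H w s(u, v) ≤ ENNReal.ofReal t * edist E w s(u, v)

open Classical in
/-- One pass of the greedy algorithm over a list of candidate edges. -/
noncomputable def greedyList (w : Sym2 V → ℝ) (t : ℝ) :
    List (Sym2 V) → Finset (Sym2 V) → Finset (Sym2 V)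
  | [], H => H
  | e :: l, H =>
      greedyList w t l (if ENNReal.ofReal (t * w e) < edist H w e then insert e H else H)

/-- `H` is an output of the greedy `t`-spanner algorithm on the graph with
edge set `E` and weights `w`: the edges of `E` are processed in some
non-decreasing order of weight. -/
def IsGreedy (w : Sym2 V → ℝ) (t : ℝ) (E H : Finset (Sym2 V)) : Prop :=
  ∃ l : List (Sym2 V), l.Nodup ∧ (∀ e, e ∈ l ↔ e ∈ E) ∧
    l.Pairwise (fun a b => w a ≤ w b) ∧ greedyList w t l ∅ = H

/-- `T` is a minimum spanning tree of the graph with edge set `E` and weights `w`. -/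
def IsMST (w : Sym2 V → ℝ) (E T : Finset (Sym2 V)) : Prop :=
  T ⊆ E ∧ (toSG T).IsTree ∧
    ∀ T' ⊆ E, (toSG T').IsTree → gweight w T ≤ gweight w T'

/-- The edge set of the complete graph on `V`. -/
def completeE (V : Type*) [Fintype V] [DecidableEq V] : Finset (Sym2 V) :=
  Finset.univ.filter fun e => ¬ e.IsDiag

/-- Metric distance as a weight function on unordered pairs. -/
noncomputable def mw (V : Type*) [MetricSpace V] : Sym2 V → ℝ :=
  Sym2.lift ⟨dist, fun a b => dist_comm a b⟩

/-- The weight function of the metric space induced by the graph with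
edge set `H` and weights `w` (shortest-path distances of pairs). -/
noncomputable def indw (H : Finset (Sym2 V)) (w : Sym2 V → ℝ) : Sym2 V → ℝ :=
  fun e => (edist H w e).toReal

/-- `d` satisfies the doubling property with doubling dimension (at most) `k`:
every ball of radius `r` can be covered by at most `2 ^ k` balls of radius `r / 2`. -/
def HasDoublingDim {M : Type*} (d : M → M → ℝ) (k : ℕ) : Prop :=
  ∀ (x : M) (r : ℝ), ∃ s : Finset M, s.card ≤ 2 ^ k ∧
    ∀ y, d x y ≤ r → ∃ c ∈ s, d c y ≤ r / 2

lemma list_sum_ne_top (l : List ℝ≥0∞) (h : ∀ x ∈ l, x ≠ ⊤) : l.sum ≠ ⊤ := by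
  induction l with
  | nil => simp
  | cons a l ih =>
      simp only [List.sum_cons, ENNReal.add_ne_top]
      exact ⟨h a List.mem_cons_self, ih fun x hx => h x (List.mem_cons_of_mem a hx)⟩

lemma walkWeight_ne_top (w : Sym2 V → ℝ) {G : SimpleGraph V} {u v : V}
    (p : G.Walk u v) : walkWeight w p ≠ ⊤ := by
  apply list_sum_ne_top
  intro x hx
  simp only [List.mem_map] at hx
  obtain ⟨e, -, rfl⟩ := hx
  exact ENNReal.ofReal_ne_top

lemma single_mem_le {α : Type*} (f : α → ℝ≥0∞) (l : List α) {x : α} (hx : x ∈ l) :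
    f x ≤ (l.map f).sum := by
  induction l with
  | nil => simp at hx
  | cons a l ih =>
      rcases List.mem_cons.mp hx with h | h
      · subst h; simp [le_add_right]
      · simpa using le_add_left (ih h)

lemma two_mem_le {α : Type*} (f : α → ℝ≥0∞) (l : List α) {x y : α} (hxy : x ≠ y)
    (hx : x ∈ l) (hy : y ∈ l) : f x + f y ≤ (l.map f).sum := by
  induction l with
  | nil => simp at hx
  | cons a l ih =>
      simp only [List.map_cons, List.sum_cons]
      rcases List.mem_cons.mp hx with h | h
      · subst h
        have hy' : y ∈ l := by
          rcases List.mem_cons.mp hy with h' | h'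
          · exact absurd h'.symm hxy
          · exact h'
        exact add_le_add le_rfl (single_mem_le f l hy')
      · rcases List.mem_cons.mp hy with h' | h'
        · subst h'
          rw [add_comm (f x)]
          exact add_le_add le_rfl (single_mem_le f l h)
        · exact le_add_left (ih h h')

lemma edist_le_edge (H : Finset (Sym2 V)) (w : Sym2 V → ℝ) {u v : V}
    (huv : s(u, v) ∈ H) (hne : u ≠ v) :
    edist H w s(u, v) ≤ ENNReal.ofReal (w s(u, v)) := by
  have hadj : (toSG H).Adj u v := by
    simp [toSG, SimpleGraph.fromEdgeSet_adj, huv, hne]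
  refine sInf_le ⟨u, v, SimpleGraph.Walk.cons hadj SimpleGraph.Walk.nil, rfl, ?_⟩
  simp [walkWeight]

lemma mw_eq (V : Type*) [MetricSpace V] (u v : V) : mw V s(u, v) = dist u v := by
  simp [mw]

lemma covering_aux {V : Type*} [MetricSpace V] [Fintype V] [DecidableEq V]
    (t : ℝ) (ht1 : 1 ≤ t) (ht2 : t < 2) (H H' : Finset (Sym2 V))
    (hH'span : ∀ u v : V, edist H' (indw H (mw V)) s(u, v) ≤
      ENNReal.ofReal t * edist H (mw V) s(u, v))
    {u₁ v₁ u₂ v₂ a b : V} (Q₁ : (toSG H').Walk u₁ v₁) (P : (toSG H).Walk a b)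
    (hne : s(u₁, v₁) ≠ s(u₂, v₂)) (he₁ : s(u₁, v₁) ∈ H)
    (hQ₁ : walkWeight (indw H (mw V)) Q₁ = edist H' (indw H (mw V)) s(u₁, v₁))
    (hab : s(a, b) ∈ Q₁.edges)
    (hP : walkWeight (mw V) P = edist H (mw V) s(a, b))
    (h1P : s(u₁, v₁) ∈ P.edges) (h2P : s(u₂, v₂) ∈ P.edges)
    (hle : dist u₁ v₁ ≤ dist u₂ v₂) : False := by
  have hv1 : u₁ ≠ v₁ := (P.adj_of_mem_edges h1P).ne
  have hd1pos : 0 < dist u₁ v₁ := dist_pos.mpr hv1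
  set d₁ := dist u₁ v₁ with hd₁
  set d₂ := dist u₂ v₂ with hd₂
  -- lower bound on edist H (mw V) s(a,b)
  have hlow : ENNReal.ofReal (d₁ + d₂) ≤ edist H (mw V) s(a, b) := by
    rw [← hP, ENNReal.ofReal_add dist_nonneg dist_nonneg]
    have := two_mem_le (fun e => ENNReal.ofReal (mw V e)) P.edges hne h1P h2P
    simpa [walkWeight, mw_eq] using this
  have hfin : edist H (mw V) s(a, b) ≠ ⊤ := by
    rw [← hP]; exact walkWeight_ne_top _ _
  have hind : d₁ + d₂ ≤ indw H (mw V) s(a, b) := by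
    have := ENNReal.toReal_mono hfin hlow
    rwa [ENNReal.toReal_ofReal (by positivity)] at this
  -- upper bound via Q₁
  have hup : ENNReal.ofReal (indw H (mw V) s(a, b)) ≤ ENNReal.ofReal (t * d₁) := by
    calc ENNReal.ofReal (indw H (mw V) s(a, b))
        ≤ walkWeight (indw H (mw V)) Q₁ := by
          have := single_mem_le (fun e => ENNReal.ofReal (indw H (mw V) e)) Q₁.edges hab
          simpa [walkWeight] using this
      _ = edist H' (indw H (mw V)) s(u₁, v₁) := hQ₁
      _ ≤ ENNReal.ofReal t * edist H (mw V) s(u₁, v₁) := hH'span u₁ v₁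
      _ ≤ ENNReal.ofReal t * ENNReal.ofReal d₁ := by
          gcongr
          simpa [mw_eq] using edist_le_edge H (mw V) he₁ hv1
      _ = ENNReal.ofReal (t * d₁) := by
          rw [ENNReal.ofReal_mul (by linarith)]
  have h1 : indw H (mw V) s(a, b) ≤ t * d₁ := by
    have := ENNReal.toReal_mono ENNReal.ofReal_ne_top hup
    rwa [ENNReal.toReal_ofReal (by nlinarith), ENNReal.toReal_ofReal (by nlinarith)] at this
  nlinarith

/-- Covering injection lemma: let `H` be the greedy
`t`-spanner of a finite metric space with `t < 2` and `H'` a `t`-spanner of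
`M_H`. For edges `e'` of `H'`, fix shortest paths `P` in `H`; then no edge
`e' = (a,b)` of `H'` can cover (i.e., have its shortest path `P` pass through)
two distinct edges `e₁, e₂ ∈ H \ H'` each of whose assigned shortest path
`Qᵢ` in `H'` passes through `e'`. -/
theorem covering_injection {V : Type*} [MetricSpace V] [Fintype V] [DecidableEq V]
    (t : ℝ) (ht1 : 1 ≤ t) (ht2 : t < 2) (H H' : Finset (Sym2 V))
    (hH : IsGreedy (mw V) t (completeE V) H) (hH'sub : H' ⊆ completeE V)
    (hH'span : ∀ u v : V, edist H' (indw H (mw V)) s(u, v) ≤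
      ENNReal.ofReal t * edist H (mw V) s(u, v)) :
    ¬ ∃ (u₁ v₁ u₂ v₂ a b : V) (Q₁ : (toSG H').Walk u₁ v₁)
        (Q₂ : (toSG H').Walk u₂ v₂) (P : (toSG H).Walk a b),
      s(u₁, v₁) ≠ s(u₂, v₂) ∧
      s(u₁, v₁) ∈ H ∧ s(u₁, v₁) ∉ H' ∧ s(u₂, v₂) ∈ H ∧ s(u₂, v₂) ∉ H' ∧
      s(a, b) ∈ H' ∧
      walkWeight (indw H (mw V)) Q₁ = edist H' (indw H (mw V)) s(u₁, v₁) ∧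
      walkWeight (indw H (mw V)) Q₂ = edist H' (indw H (mw V)) s(u₂, v₂) ∧
      s(a, b) ∈ Q₁.edges ∧ s(a, b) ∈ Q₂.edges ∧
      walkWeight (mw V) P = edist H (mw V) s(a, b) ∧
      s(u₁, v₁) ∈ P.edges ∧ s(u₂, v₂) ∈ P.edges := by
  rintro ⟨u₁, v₁, u₂, v₂, a, b, Q₁, Q₂, P, hne, he₁, -, he₂, -, -, hQ₁, hQ₂, hab1, hab2,
    hP, h1P, h2P⟩
  rcases le_total (dist u₁ v₁) (dist u₂ v₂) with h | h
  · exact covering_aux t ht1 ht2 H H' hH'span Q₁ P hne he₁ hQ₁ hab1 hP h1P h2P h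
  · exact covering_aux t ht1 ht2 H H' hH'span Q₂ P hne.symm he₂ hQ₂ hab2 hP h2P h1P h
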